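/- Let X be a nonempty topological space with a quandle operation ▷ (x ▷ x = x; each right translation β_y(x) = x ▷ y is a bijection; (x ▷ y) ▷ z = (x ▷ z) ▷ (y ▷ z)) which is continuous X × X → X. Assume X is path-connected and indecomposable: for every x, y ∈ X, x and y are related by the equivalence relation generated by the relation a ~ b ⟺ ∃ c, b = a ▷ c. Then the quotient of the free abelian group on X by the subgroup generated by the elements (of a) − (of (a ▷ b)), for all a, b ∈ X, is isomorphic as an additive group to ℤ. (Since X is path-connected, this quotient is exactly the zeroth topological quandle homology group H₀(X).) -/

import Mathlib

/-- Let `X` be a nonempty topological space with a continuous quandle operation `op`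
(idempotent, bijective right translations, right self-distributive). If `X` is
path-connected and indecomposable (any two points are related by the equivalence relation
generated by `a ~ a ▷ c`), then the quotient of the free abelian group on `X` by the
subgroup generated by all elements `of a - of (a ▷ b)` — which is the zeroth topological
quandle homology group `H₀(X)` — is isomorphic to `ℤ`. -/
theorem H0_of_pathConnected_indecomposable {X : Type*} [TopologicalSpace X] [Nonempty X]
    (op : X → X → X)
    (hcont : Continuous fun p : X × X => op p.1 p.2)
    (hidem : ∀ x : X, op x x = x)
    (hbij : ∀ y : X, Function.Bijective fun x : X => op x y)
    (hdist : ∀ x y z : X, op (op x y) z = op (op x z) (op y z))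
    (hpath : PathConnectedSpace X)
    (hind : ∀ x y : X, Relation.EqvGen (fun a b : X => ∃ c : X, b = op a c) x y) :
    Nonempty ((FreeAbelianGroup X ⧸ AddSubgroup.closure
      {z : FreeAbelianGroup X | ∃ a b : X,
        z = FreeAbelianGroup.of a - FreeAbelianGroup.of (op a b)}) ≃+ ℤ) := by
  classical
  set S : AddSubgroup (FreeAbelianGroup X) := AddSubgroup.closure
      {z : FreeAbelianGroup X | ∃ a b : X,
        z = FreeAbelianGroup.of a - FreeAbelianGroup.of (op a b)} with hS
  -- any difference of generators lies in S
  have key : ∀ x y : X, FreeAbelianGroup.of x - FreeAbelianGroup.of y ∈ S := by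
    intro x y
    induction hind x y with
    | rel a b hab =>
        obtain ⟨c, rfl⟩ := hab
        exact AddSubgroup.subset_closure ⟨a, c, rfl⟩
    | refl a => simpa using S.zero_mem
    | symm a b _ ih =>
        have := S.neg_mem ih
        simpa using this
    | trans a b c _ _ ih1 ih2 =>
        have := S.add_mem ih1 ih2
        simpa using this
  obtain ⟨x₀⟩ := ‹Nonempty X›
  -- the augmentation map
  set ε : FreeAbelianGroup X →+ ℤ := (FreeAbelianGroup.lift (fun _ : X => (1 : ℤ))) with hε
  have hεof : ∀ x : X, ε (FreeAbelianGroup.of x) = 1 := fun x =>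
    FreeAbelianGroup.lift_apply_of _ _
  have hSker : ∀ z ∈ S, ε z = 0 := by
    intro z hz
    have : S ≤ ε.ker := by
      rw [hS, AddSubgroup.closure_le]
      rintro w ⟨a, b, rfl⟩
      simp [AddMonoidHom.mem_ker, hεof]
    exact this hz
  have hrep : ∀ z : FreeAbelianGroup X,
      z - ε z • FreeAbelianGroup.of x₀ ∈ S := by
    intro z
    induction z using FreeAbelianGroup.induction_on with
    | zero => simpa using S.zero_mem
    | of x => simpa [hεof] using key x x₀
    | neg x ih =>
        have := S.neg_mem ih
        simpa [neg_sub, sub_eq_add_neg, add_comm] using this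
    | add z w ihz ihw =>
        have := S.add_mem ihz ihw
        have h2 : z + w - ε (z + w) • FreeAbelianGroup.of x₀ =
            (z - ε z • FreeAbelianGroup.of x₀) + (w - ε w • FreeAbelianGroup.of x₀) := by
          simp [add_smul]
          abel
        rw [h2]
        exact this
  -- descend ε to the quotient
  let ψ : (FreeAbelianGroup X ⧸ S) →+ ℤ := QuotientAddGroup.lift S ε hSker
  refine ⟨{
    toFun := ψ
    invFun := fun n => n • (QuotientAddGroup.mk (FreeAbelianGroup.of x₀) : FreeAbelianGroup X ⧸ S)
    left_inv := ?_
    right_inv := ?_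
    map_add' := ψ.map_add }⟩
  · intro q
    induction q using QuotientAddGroup.induction_on with
    | H z =>
        have hz := hrep z
        have : (QuotientAddGroup.mk z : FreeAbelianGroup X ⧸ S) =
            ε z • QuotientAddGroup.mk (FreeAbelianGroup.of x₀) := by
          rw [← QuotientAddGroup.mk_zsmul, QuotientAddGroup.eq]
          simpa [neg_add_eq_sub] using S.neg_mem hz
        simpa [ψ, QuotientAddGroup.lift_mk (φ := ε) (HN := hSker)] using this.symm
  · intro n
    simp [ψ, hεof, QuotientAddGroup.lift_mk (φ := ε) (HN := hSker)]
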